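/- Let a₁,…,a_r ∈ ℝⁿ be unit vectors forming the columns of a matrix A with ‖Id_r − AᵀA‖ ≤ ε. For any fixed index i, the matrix D_i := Σ_{j≠i} ⟨a_i, a_j⟩ · a_j a_jᵀ satisfies ‖D_i‖ ≤ (1+ε)·ε (operator norm), where D_i = M_{a_i}(S) − a_i a_iᵀ for S = Σ_j a_j^{⊗3}. -/

import Mathlib

open Matrix

/-- If `A` has unit columns `a₁,…,a_r` with `‖Id − AᵀA‖ ≤ ε` (operator norm,
stated via quadratic forms), then for each `i` the matrix
`Dᵢ = Σ_{j≠i} ⟨aᵢ,aⱼ⟩ aⱼaⱼᵀ` has operator norm at most `(1+ε)·ε`. -/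
theorem stmt_14 {n r : ℕ} (ε : ℝ) (A : Matrix (Fin n) (Fin r) ℝ)
    (a : Fin r → (Fin n → ℝ)) (haA : ∀ i j, a i j = A j i)
    (hunit : ∀ i, a i ⬝ᵥ a i = 1)
    (hop : ∀ v : Fin r → ℝ,
      |v ⬝ᵥ (((1 : Matrix (Fin r) (Fin r) ℝ) - Aᵀ * A) *ᵥ v)| ≤ ε * (v ⬝ᵥ v))
    (i : Fin r) (D : Matrix (Fin n) (Fin n) ℝ)
    (hD : D = ∑ j ∈ Finset.univ.erase i, (a i ⬝ᵥ a j) • vecMulVec (a j) (a j)) :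
    ∀ v : Fin n → ℝ, |v ⬝ᵥ (D *ᵥ v)| ≤ (1 + ε) * ε * (v ⬝ᵥ v) := by
  intro v
  have hself : ∀ {m : ℕ} (w : Fin m → ℝ), 0 ≤ w ⬝ᵥ w := fun w =>
    Finset.sum_nonneg fun _ _ => mul_self_nonneg _
  -- entries of AᵀA
  have hM : ∀ p q : Fin r, (Aᵀ * A) p q = a p ⬝ᵥ a q := by
    intro p q
    simp [Matrix.mul_apply, dotProduct, haA]
  -- quadratic form entries
  have hent : ∀ (N : Matrix (Fin r) (Fin r) ℝ) (p q : Fin r),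
      (Pi.single p 1 : Fin r → ℝ) ⬝ᵥ (N *ᵥ Pi.single q 1) = N p q := by
    intro N p q
    simp [dotProduct, Matrix.mulVec, Pi.single_apply, mul_ite, ite_mul,
      Finset.sum_ite_eq, Finset.sum_ite_eq']
  -- ε ≥ 0
  have hε : 0 ≤ ε := by
    have h := hop (Pi.single i 1)
    have h1 : (Pi.single i 1 : Fin r → ℝ) ⬝ᵥ Pi.single i 1 = 1 := by
      simp [dotProduct, Pi.single_apply]
    rw [h1, mul_one] at h
    exact le_trans (abs_nonneg _) h
  -- off-diagonal bound
  have hoff : ∀ j : Fin r, j ≠ i → |a i ⬝ᵥ a j| ≤ ε := by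
    intro j hj
    have h := hop (Pi.single i 1 + Pi.single j 1)
    have huu : (Pi.single i 1 + Pi.single j 1 : Fin r → ℝ) ⬝ᵥ
        (Pi.single i 1 + Pi.single j 1) = 2 := by
      simp [dotProduct, Pi.single_apply, add_mul, mul_add, Finset.sum_add_distrib,
        hj, Ne.symm hj, ite_mul, mul_ite, Finset.sum_ite_eq', Finset.sum_ite_eq]
      norm_num
    have hq : (Pi.single i 1 + Pi.single j 1 : Fin r → ℝ) ⬝ᵥ
        (((1 : Matrix (Fin r) (Fin r) ℝ) - Aᵀ * A) *ᵥ (Pi.single i 1 + Pi.single j 1))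
        = (-2) * (a i ⬝ᵥ a j) := by
      rw [Matrix.mulVec_add, dotProduct_add, add_dotProduct, add_dotProduct,
        hent, hent, hent, hent]
      simp only [Matrix.sub_apply, Matrix.one_apply_eq, Matrix.one_apply_ne hj,
        Matrix.one_apply_ne (Ne.symm hj), hM, hunit]
      rw [dotProduct_comm (a j) (a i)]
      ring
    rw [hq, huu] at h
    rw [abs_mul] at h
    have habs : |(-2 : ℝ)| = 2 := by norm_num
    rw [habs] at h
    linarith [h, abs_nonneg (a i ⬝ᵥ a j)]
  -- single rank-one quadratic form
  have hvmv : ∀ w : Fin n → ℝ, v ⬝ᵥ (vecMulVec w w *ᵥ v) = (w ⬝ᵥ v)^2 := by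
    intro w
    have h1 : vecMulVec w w *ᵥ v = (w ⬝ᵥ v) • w := by
      ext k
      simp only [Matrix.mulVec, dotProduct, vecMulVec_apply, Pi.smul_apply,
        smul_eq_mul, Finset.sum_mul]
      exact Finset.sum_congr rfl fun m _ => by ring
    rw [h1, dotProduct_smul, smul_eq_mul, dotProduct_comm, pow_two]
  -- key expansion of v ⬝ D v
  have key : v ⬝ᵥ (D *ᵥ v) = ∑ j ∈ Finset.univ.erase i, (a i ⬝ᵥ a j) * (a j ⬝ᵥ v)^2 := by
    subst hD
    induction (Finset.univ.erase i) using Finset.induction with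
    | empty => simp
    | insert _ _ h ih =>
      rw [Finset.sum_insert h, Finset.sum_insert h, Matrix.add_mulVec, dotProduct_add, ih,
        Matrix.smul_mulVec, dotProduct_smul, smul_eq_mul, hvmv]
  -- sum of squares bound
  set u : Fin r → ℝ := fun j => a j ⬝ᵥ v with hu
  have hvA : v ᵥ* A = u := by
    ext j
    simp [Matrix.vecMul, dotProduct, hu, haA, mul_comm]
  have hudot : u ⬝ᵥ u = v ⬝ᵥ (A *ᵥ u) := by
    rw [Matrix.dotProduct_mulVec, hvA]
  have hAuAu : u ⬝ᵥ ((Aᵀ * A) *ᵥ u) = (A *ᵥ u) ⬝ᵥ (A *ᵥ u) := by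
    rw [← Matrix.mulVec_mulVec, Matrix.dotProduct_mulVec, Matrix.vecMul_transpose]
  have hAu : (A *ᵥ u) ⬝ᵥ (A *ᵥ u) ≤ (1 + ε) * (u ⬝ᵥ u) := by
    have h := hop u
    rw [Matrix.sub_mulVec, Matrix.one_mulVec, dotProduct_sub, hAuAu] at h
    have huu0 : 0 ≤ u ⬝ᵥ u := hself u
    have habs := neg_abs_le (u ⬝ᵥ u - (A *ᵥ u) ⬝ᵥ (A *ᵥ u))
    nlinarith [habs, h]
  have hsq : u ⬝ᵥ u ≤ (1 + ε) * (v ⬝ᵥ v) := by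
    have hcs : (v ⬝ᵥ (A *ᵥ u))^2 ≤ (v ⬝ᵥ v) * ((A *ᵥ u) ⬝ᵥ (A *ᵥ u)) := by
      have h := Finset.sum_mul_sq_le_sq_mul_sq Finset.univ v (A *ᵥ u)
      simpa [dotProduct, pow_two] using h
    rcases eq_or_lt_of_le (hself u) with h0 | h0
    · rw [← h0]; exact mul_nonneg (by linarith) (hself v)
    · have h1 : (u ⬝ᵥ u)^2 ≤ (v ⬝ᵥ v) * ((1 + ε) * (u ⬝ᵥ u)) := by
        calc (u ⬝ᵥ u)^2 = (v ⬝ᵥ (A *ᵥ u))^2 := by rw [hudot]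
        _ ≤ (v ⬝ᵥ v) * ((A *ᵥ u) ⬝ᵥ (A *ᵥ u)) := hcs
        _ ≤ (v ⬝ᵥ v) * ((1 + ε) * (u ⬝ᵥ u)) :=
            mul_le_mul_of_nonneg_left hAu (hself v)
      nlinarith
  -- finish
  calc |v ⬝ᵥ (D *ᵥ v)|
      = |∑ j ∈ Finset.univ.erase i, (a i ⬝ᵥ a j) * (a j ⬝ᵥ v)^2| := by rw [key]
    _ ≤ ∑ j ∈ Finset.univ.erase i, |(a i ⬝ᵥ a j) * (a j ⬝ᵥ v)^2| :=
        Finset.abs_sum_le_sum_abs _ _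
    _ ≤ ∑ j ∈ Finset.univ.erase i, ε * (a j ⬝ᵥ v)^2 := by
        refine Finset.sum_le_sum fun j hj => ?_
        rw [abs_mul, abs_pow, sq_abs]
        exact mul_le_mul_of_nonneg_right (hoff j (Finset.ne_of_mem_erase hj)) (sq_nonneg _)
    _ ≤ ∑ j, ε * (a j ⬝ᵥ v)^2 := by
        apply Finset.sum_le_sum_of_subset_of_nonneg (Finset.erase_subset _ _)
        intro j _ _; positivity
    _ = ε * (u ⬝ᵥ u) := by
        have huu : u ⬝ᵥ u = ∑ j, (a j ⬝ᵥ v)^2 := by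
          simp only [dotProduct, hu, pow_two]
        rw [huu, Finset.mul_sum]
    _ ≤ ε * ((1 + ε) * (v ⬝ᵥ v)) := mul_le_mul_of_nonneg_left hsq hε
    _ = (1 + ε) * ε * (v ⬝ᵥ v) := by ring
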